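/- Let P, Q ∈ ℝ^{n×n} be positive definite, A ∈ ℝ^{n×n}, and let S ∈ ℝ^{n×n} be positive semidefinite. Define G = P Aᵀ (A P Aᵀ + Q)⁻¹ and C = P − G (A P Aᵀ + Q) Gᵀ. Then C is positive definite and for all m, s, z ∈ ℝⁿ (with S positive definite so that f_n(·; s, S) is defined), ∫_{ℝⁿ} f_n(z; m + G(w − A m), C) · f_n(w; s, S) dw = f_n(z; m + G(s − A m), P + G(S − A P Aᵀ − Q) Gᵀ). -/

import Mathlib

open MeasureTheory Matrix

/-- Multivariate normal density `f(z; μ, S)` with respect to Lebesgue measure. -/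
noncomputable def mvGaussianPdf {ι : Type*} [Fintype ι] [DecidableEq ι]
    (μ : ι → ℝ) (S : Matrix ι ι ℝ) (z : ι → ℝ) : ℝ :=
  (2 * Real.pi) ^ (-(Fintype.card ι : ℝ) / 2) * S.det ^ (-(1 : ℝ) / 2) *
    Real.exp (-(1 / 2) * ((z - μ) ⬝ᵥ (S⁻¹ *ᵥ (z - μ))))

set_option maxHeartbeats 1000000

namespace Stmt14Aux

open Real

variable {n : ℕ}
lemma base_integral (n : ℕ) :
    ∫ y : Fin n → ℝ, Real.exp (-(1/2) * (y ⬝ᵥ y)) = Real.sqrt (2 * π) ^ n := by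
  have h : ∀ y : Fin n → ℝ, Real.exp (-(1/2) * (y ⬝ᵥ y)) = ∏ i, Real.exp (-(1/2) * (y i ^ 2)) := by
    intro y
    rw [← Real.exp_sum, dotProduct]
    congr 1
    rw [Finset.mul_sum]
    congr 1; ext i; ring
  simp_rw [h]
  rw [MeasureTheory.integral_fintype_prod_volume_eq_pow (ι := Fin n)
    (fun t : ℝ => Real.exp (-(1/2) * t ^ 2)), Fintype.card_fin]
  congr 1
  have := integral_gaussian (1/2)
  simp_rw [neg_mul] at this ⊢
  rw [this]
  norm_num [mul_comm]

open scoped MatrixOrder in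
lemma integral_mvGaussianPdf {n : ℕ} (μ : Fin n → ℝ) (V : Matrix (Fin n) (Fin n) ℝ)
    (hV : V.PosDef) : ∫ w : Fin n → ℝ, mvGaussianPdf μ V w = 1 := by
  -- square root
  set R := CFC.sqrt V with hRdef
  have hRps : R.PosSemidef := Matrix.nonneg_iff_posSemidef.mp (CFC.sqrt_nonneg V)
  have hRR : R * R = V := CFC.sqrt_mul_sqrt_self V (Matrix.nonneg_iff_posSemidef.mpr hV.posSemidef)
  have hdetV : 0 < V.det := hV.det_pos
  have hdetRnn : 0 ≤ R.det := by
    rw [hRps.isHermitian.det_eq_prod_eigenvalues]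
    exact Finset.prod_nonneg fun i _ => hRps.eigenvalues_nonneg i
  have hdet2 : R.det * R.det = V.det := by rw [← det_mul, hRR]
  have hdetR : 0 < R.det := by
    have h2 := hdet2
    rcases lt_or_eq_of_le hdetRnn with h | h
    · exact h
    · exfalso; rw [← h] at h2; simp at h2; rw [← h2] at hdetV; linarith
  have hRdet0 : R.det ≠ 0 := ne_of_gt hdetR
  have hRT : Rᵀ = R := by
    have := hRps.isHermitian
    rwa [IsHermitian, conjTranspose_eq_transpose_of_trivial] at this
  have hRinv : R * R⁻¹ = 1 := mul_nonsing_inv R (isUnit_iff_ne_zero.mpr hRdet0)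
  -- quadratic form under substitution
  have hquad : ∀ y : Fin n → ℝ, (R *ᵥ y) ⬝ᵥ (V⁻¹ *ᵥ (R *ᵥ y)) = y ⬝ᵥ y := by
    intro y
    have hVinv : V⁻¹ = R⁻¹ * R⁻¹ := by rw [← hRR, Matrix.mul_inv_rev]
    rw [hVinv, mulVec_mulVec]
    have h3 : R⁻¹ * R⁻¹ * R = R⁻¹ := by
      rw [mul_assoc, nonsing_inv_mul R (isUnit_iff_ne_zero.mpr hRdet0), mul_one]
    rw [h3, dotProduct_mulVec, ← mulVec_transpose, transpose_nonsing_inv, hRT, mulVec_mulVec,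
      nonsing_inv_mul R (isUnit_iff_ne_zero.mpr hRdet0), one_mulVec]
  -- translation
  have htrans : ∫ w : Fin n → ℝ, Real.exp (-(1/2) * ((w - μ) ⬝ᵥ (V⁻¹ *ᵥ (w - μ))))
      = ∫ w : Fin n → ℝ, Real.exp (-(1/2) * (w ⬝ᵥ (V⁻¹ *ᵥ w))) :=
    integral_sub_right_eq_self (fun x => Real.exp (-(1/2) * (x ⬝ᵥ (V⁻¹ *ᵥ x)))) μ
  -- change of variables
  have hmap : Measure.map (Matrix.toLin' R) volume
      = ENNReal.ofReal |R.det⁻¹| • (volume : Measure (Fin n → ℝ)) :=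
    Real.map_matrix_volume_pi_eq_smul_volume_pi hRdet0
  have hcont : Continuous fun x : Fin n → ℝ => Real.exp (-(1/2) * (x ⬝ᵥ (V⁻¹ *ᵥ x))) := by
    simp only [dotProduct, mulVec]
    fun_prop
  have hmeas : Measurable (Matrix.toLin' R) :=
    (Matrix.toLin' R).continuous_of_finiteDimensional.measurable
  have hchange : ∫ w : Fin n → ℝ, Real.exp (-(1/2) * (w ⬝ᵥ (V⁻¹ *ᵥ w)))
      = R.det * ∫ y : Fin n → ℝ, Real.exp (-(1/2) * (y ⬝ᵥ y)) := by
    have h1 : ∫ y : Fin n → ℝ, Real.exp (-(1/2) * ((R *ᵥ y) ⬝ᵥ (V⁻¹ *ᵥ (R *ᵥ y))))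
        = ∫ w : Fin n → ℝ, Real.exp (-(1/2) * (w ⬝ᵥ (V⁻¹ *ᵥ w)))
          ∂(Measure.map (Matrix.toLin' R) volume) := by
      rw [integral_map hmeas.aemeasurable hcont.aestronglyMeasurable]
      simp [Matrix.toLin'_apply]
    rw [hmap, integral_smul_measure] at h1
    simp_rw [hquad] at h1
    rw [ENNReal.toReal_ofReal (abs_nonneg _), abs_of_pos (inv_pos.mpr hdetR), smul_eq_mul] at h1
    rw [h1]
    field_simp
  -- assemble
  unfold mvGaussianPdf
  rw [integral_const_mul, htrans, hchange, base_integral, Fintype.card_fin]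
  -- now pure arithmetic: (2π)^(-n/2) * detΣ^(-1/2) * (detR * √(2π)^n) = 1
  have h2π : (0:ℝ) < 2 * π := by positivity
  have hsq : Real.sqrt (2*π) ^ n = (2*π) ^ ((n:ℝ)/2) := by
    rw [Real.sqrt_eq_rpow, ← Real.rpow_natCast ((2*π) ^ ((1:ℝ)/2)) n,
      ← Real.rpow_mul h2π.le]
    ring_nf
  have hRdetEq : R.det = V.det ^ ((1:ℝ)/2) := by
    rw [← Real.sqrt_eq_rpow, ← hdet2, Real.sqrt_mul_self hdetRnn]
  rw [hsq, hRdetEq]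
  have h1 : (2*π)^(-(n:ℝ)/2) * (2*π)^((n:ℝ)/2) = 1 := by
    rw [← Real.rpow_add h2π, neg_div, neg_add_cancel, Real.rpow_zero]
  have h2 : V.det ^ (-(1:ℝ)/2) * V.det ^ ((1:ℝ)/2) = 1 := by
    rw [← Real.rpow_add hdetV, neg_div, neg_add_cancel, Real.rpow_zero]
  calc (2*π)^(-(n:ℝ)/2) * V.det ^ (-(1:ℝ)/2) * (V.det ^ ((1:ℝ)/2) * (2*π)^((n:ℝ)/2))
      = ((2*π)^(-(n:ℝ)/2) * (2*π)^((n:ℝ)/2)) * (V.det ^ (-(1:ℝ)/2) * V.det ^ ((1:ℝ)/2)) := by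
        ring
    _ = 1 := by rw [h1, h2, mul_one]

variable {n : ℕ}

lemma dp_tr (M : Matrix (Fin n) (Fin n) ℝ) (x y : Fin n → ℝ) :
    (M *ᵥ x) ⬝ᵥ y = x ⬝ᵥ (Mᵀ *ᵥ y) := by
  rw [dotProduct_mulVec, ← mulVec_transpose, transpose_transpose]

lemma dp_symm {M : Matrix (Fin n) (Fin n) ℝ} (hM : Mᵀ = M) (x y : Fin n → ℝ) :
    x ⬝ᵥ (M *ᵥ y) = y ⬝ᵥ (M *ᵥ x) := by
  rw [dotProduct_comm, dp_tr, hM]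

lemma inv_transpose_self {M : Matrix (Fin n) (Fin n) ℝ} (hM : M.PosDef) :
    M⁻¹ᵀ = M⁻¹ := by
  have := hM.inv.isHermitian
  rwa [IsHermitian, conjTranspose_eq_transpose_of_trivial] at this

lemma transpose_self {M : Matrix (Fin n) (Fin n) ℝ} (hM : M.PosDef) : Mᵀ = M := by
  have := hM.isHermitian
  rwa [IsHermitian, conjTranspose_eq_transpose_of_trivial] at this

variable {n : ℕ}

lemma psd_conj {M A : Matrix (Fin n) (Fin n) ℝ} (hM : M.PosSemidef) :
    (A * M * Aᵀ).PosSemidef := by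
  have := hM.mul_mul_conjTranspose_same A
  rwa [conjTranspose_eq_transpose_of_trivial] at this

lemma psd_conj' {M A : Matrix (Fin n) (Fin n) ℝ} (hM : M.PosSemidef) :
    (Aᵀ * M * A).PosSemidef := by
  have := hM.conjTranspose_mul_mul_same A
  rwa [conjTranspose_eq_transpose_of_trivial] at this

lemma N_posDef {P Q A : Matrix (Fin n) (Fin n) ℝ} (hP : P.PosDef) (hQ : Q.PosDef) :
    (P⁻¹ + Aᵀ * Q⁻¹ * A).PosDef :=
  hP.inv.add_posSemidef (psd_conj' hQ.inv.posSemidef)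

lemma M_posDef {P Q A : Matrix (Fin n) (Fin n) ℝ} (hP : P.PosDef) (hQ : Q.PosDef) :
    (A * P * Aᵀ + Q).PosDef :=
  Matrix.PosDef.posSemidef_add (psd_conj hP.posSemidef) hQ

lemma woodbury {P Q A : Matrix (Fin n) (Fin n) ℝ} (hP : P.PosDef) (hQ : Q.PosDef) :
    (P⁻¹ + Aᵀ * Q⁻¹ * A)⁻¹ = P - P * Aᵀ * (A * P * Aᵀ + Q)⁻¹ * A * P := by
  set M := A * P * Aᵀ + Q with hMdef
  have hM : M.PosDef := M_posDef hP hQ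
  have hPinv : P * P⁻¹ = 1 := mul_nonsing_inv P (isUnit_iff_ne_zero.mpr hP.det_pos.ne')
  have hQinv : Q * Q⁻¹ = 1 := mul_nonsing_inv Q (isUnit_iff_ne_zero.mpr hQ.det_pos.ne')
  have hMinv : M⁻¹ * M = 1 := nonsing_inv_mul M (isUnit_iff_ne_zero.mpr hM.det_pos.ne')
  have e1 : A * P * Aᵀ = M - Q := by rw [hMdef]; abel
  have K1 : M⁻¹ * (A * P * Aᵀ) * Q⁻¹ = Q⁻¹ - M⁻¹ := by
    rw [e1]
    calc M⁻¹ * (M - Q) * Q⁻¹ = M⁻¹ * M * Q⁻¹ - M⁻¹ * (Q * Q⁻¹) := by noncomm_ring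
      _ = Q⁻¹ - M⁻¹ := by rw [hMinv, hQinv, one_mul, mul_one]
  refine inv_eq_left_inv ?_
  calc (P - P * Aᵀ * M⁻¹ * A * P) * (P⁻¹ + Aᵀ * Q⁻¹ * A)
      = P * P⁻¹ + P * Aᵀ * Q⁻¹ * A - P * Aᵀ * M⁻¹ * A * (P * P⁻¹)
        - P * Aᵀ * (M⁻¹ * (A * P * Aᵀ) * Q⁻¹) * A := by noncomm_ring
    _ = 1 + P * Aᵀ * Q⁻¹ * A - P * Aᵀ * M⁻¹ * A - P * Aᵀ * (Q⁻¹ - M⁻¹) * A := by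
        rw [hPinv, K1]; noncomm_ring
    _ = 1 := by noncomm_ring

lemma woodbury' {P Q A : Matrix (Fin n) (Fin n) ℝ} (hP : P.PosDef) (hQ : Q.PosDef) :
    (A * P * Aᵀ + Q)⁻¹ = Q⁻¹ - Q⁻¹ * A * (P⁻¹ + Aᵀ * Q⁻¹ * A)⁻¹ * Aᵀ * Q⁻¹ := by
  set N := P⁻¹ + Aᵀ * Q⁻¹ * A with hNdef
  have hN : N.PosDef := N_posDef hP hQ
  have hPinv : N⁻¹ * P⁻¹ * P = N⁻¹ := by
    rw [mul_assoc, nonsing_inv_mul P (isUnit_iff_ne_zero.mpr hP.det_pos.ne'), mul_one]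
  have hQinv : Q⁻¹ * Q = 1 := nonsing_inv_mul Q (isUnit_iff_ne_zero.mpr hQ.det_pos.ne')
  have hNinv : N⁻¹ * N = 1 := nonsing_inv_mul N (isUnit_iff_ne_zero.mpr hN.det_pos.ne')
  have e1 : Aᵀ * Q⁻¹ * A = N - P⁻¹ := by rw [hNdef]; abel
  have K1 : N⁻¹ * (Aᵀ * Q⁻¹ * A) * P = P - N⁻¹ := by
    rw [e1]
    calc N⁻¹ * (N - P⁻¹) * P = N⁻¹ * N * P - N⁻¹ * P⁻¹ * P := by noncomm_ring
      _ = P - N⁻¹ := by rw [hNinv, hPinv, one_mul]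
  refine inv_eq_left_inv ?_
  calc (Q⁻¹ - Q⁻¹ * A * N⁻¹ * Aᵀ * Q⁻¹) * (A * P * Aᵀ + Q)
      = Q⁻¹ * A * P * Aᵀ + Q⁻¹ * Q - Q⁻¹ * A * (N⁻¹ * (Aᵀ * Q⁻¹ * A) * P) * Aᵀ
        - Q⁻¹ * A * N⁻¹ * Aᵀ * (Q⁻¹ * Q) := by noncomm_ring
    _ = Q⁻¹ * A * P * Aᵀ + 1 - Q⁻¹ * A * (P - N⁻¹) * Aᵀ - Q⁻¹ * A * N⁻¹ * Aᵀ := by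
        rw [hQinv, K1]; noncomm_ring
    _ = 1 := by noncomm_ring

lemma quadId {C S G : Matrix (Fin n) (Fin n) ℝ} (hC : C.PosDef) (hS : S.PosDef)
    (u v : Fin n → ℝ) :
    (v - G *ᵥ u) ⬝ᵥ (C⁻¹ *ᵥ (v - G *ᵥ u)) + u ⬝ᵥ (S⁻¹ *ᵥ u)
      = (u - (S⁻¹ + Gᵀ * C⁻¹ * G)⁻¹ *ᵥ (Gᵀ *ᵥ (C⁻¹ *ᵥ v))) ⬝ᵥ
          ((S⁻¹ + Gᵀ * C⁻¹ * G) *ᵥ (u - (S⁻¹ + Gᵀ * C⁻¹ * G)⁻¹ *ᵥ (Gᵀ *ᵥ (C⁻¹ *ᵥ v))))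
        + v ⬝ᵥ ((C + G * S * Gᵀ)⁻¹ *ᵥ v) := by
  set K := S⁻¹ + Gᵀ * C⁻¹ * G with hKdef
  have hK : K.PosDef := hS.inv.add_posSemidef (psd_conj' hC.inv.posSemidef)
  have hSigInv : (C + G * S * Gᵀ)⁻¹ = C⁻¹ - C⁻¹ * G * K⁻¹ * Gᵀ * C⁻¹ := by
    rw [add_comm]; exact woodbury' hS hC
  have hCiT : C⁻¹ᵀ = C⁻¹ := inv_transpose_self hC
  have hKT : Kᵀ = K := transpose_self hK
  have hKiT : K⁻¹ᵀ = K⁻¹ := inv_transpose_self hK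
  have hKKi : K * K⁻¹ = 1 := mul_nonsing_inv K (isUnit_iff_ne_zero.mpr hK.det_pos.ne')
  set t := K⁻¹ *ᵥ (Gᵀ *ᵥ (C⁻¹ *ᵥ v)) with htdef
  have hKt : K *ᵥ t = Gᵀ *ᵥ (C⁻¹ *ᵥ v) := by
    rw [htdef, mulVec_mulVec, hKKi, one_mulVec]
  have a1 : (G *ᵥ u) ⬝ᵥ (C⁻¹ *ᵥ (G *ᵥ u)) = u ⬝ᵥ ((Gᵀ * C⁻¹ * G) *ᵥ u) := by
    rw [dp_tr]; simp [mulVec_mulVec, Matrix.mul_assoc]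
  have a2 : v ⬝ᵥ (C⁻¹ *ᵥ (G *ᵥ u)) = u ⬝ᵥ (K *ᵥ t) := by
    rw [hKt, dp_symm hCiT, ← dp_tr]
  have a3 : (G *ᵥ u) ⬝ᵥ (C⁻¹ *ᵥ v) = u ⬝ᵥ (K *ᵥ t) := by
    rw [hKt, dp_tr]
  have a4 : t ⬝ᵥ (K *ᵥ u) = u ⬝ᵥ (K *ᵥ t) := dp_symm hKT t u
  have a5 : t ⬝ᵥ (K *ᵥ t) = v ⬝ᵥ ((C⁻¹ * G * K⁻¹ * Gᵀ * C⁻¹) *ᵥ v) := by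
    rw [hKt, htdef, dp_tr, hKiT, dp_tr, transpose_transpose, dp_tr, hCiT]
    simp only [mulVec_mulVec, Matrix.mul_assoc]
  have aK : u ⬝ᵥ (S⁻¹ *ᵥ u) = u ⬝ᵥ (K *ᵥ u) - u ⬝ᵥ ((Gᵀ * C⁻¹ * G) *ᵥ u) := by
    rw [hKdef, add_mulVec, dotProduct_add]; ring
  simp only [hSigInv, mulVec_sub, dotProduct_sub, sub_dotProduct, sub_mulVec]
  rw [a1, a2, a3, a4, ← a5, aK]
  ring

lemma conv {C S G : Matrix (Fin n) (Fin n) ℝ} (hC : C.PosDef) (hS : S.PosDef)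
    (a s z : Fin n → ℝ) :
    ∫ w : Fin n → ℝ, mvGaussianPdf (a + G *ᵥ w) C z * mvGaussianPdf s S w
      = mvGaussianPdf (a + G *ᵥ s) (C + G * S * Gᵀ) z := by
  set K := S⁻¹ + Gᵀ * C⁻¹ * G with hKdef
  have hK : K.PosDef := hS.inv.add_posSemidef (psd_conj' hC.inv.posSemidef)
  have hSig : (C + G * S * Gᵀ).PosDef := hC.add_posSemidef (psd_conj hS.posSemidef)
  have hKiKi : (K⁻¹)⁻¹ = K := Matrix.nonsing_inv_nonsing_inv K
    (isUnit_iff_ne_zero.mpr hK.det_pos.ne')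
  have hCCi : C * C⁻¹ = 1 := mul_nonsing_inv C (isUnit_iff_ne_zero.mpr hC.det_pos.ne')
  have hSSi : S * S⁻¹ = 1 := mul_nonsing_inv S (isUnit_iff_ne_zero.mpr hS.det_pos.ne')
  have hdetKi : (K⁻¹).det = K.det⁻¹ := by
    rw [Matrix.det_nonsing_inv, Ring.inverse_eq_inv']
  -- determinant factorization
  have hdetSig : (C + G * S * Gᵀ).det = C.det * (S.det * K.det) := by
    have e1 : C + G * S * Gᵀ = C * (1 + C⁻¹ * (G * S * Gᵀ)) := by
      rw [mul_add, mul_one, ← Matrix.mul_assoc, hCCi, one_mul]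
    have e2 : S * Gᵀ * (C⁻¹ * G) = S * K - 1 := by
      rw [hKdef, mul_add, hSSi]
      noncomm_ring
    rw [e1, det_mul]
    congr 1
    have : C⁻¹ * (G * S * Gᵀ) = (C⁻¹ * G) * (S * Gᵀ) := by noncomm_ring
    rw [this, det_one_add_mul_comm, e2]
    simp [det_mul]
  set μs := s + K⁻¹ *ᵥ (Gᵀ *ᵥ (C⁻¹ *ᵥ (z - a - G *ᵥ s))) with hμs
  have hpt : ∀ w : Fin n → ℝ,
      mvGaussianPdf (a + G *ᵥ w) C z * mvGaussianPdf s S w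
        = mvGaussianPdf (a + G *ᵥ s) (C + G * S * Gᵀ) z * mvGaussianPdf μs K⁻¹ w := by
    intro w
    unfold mvGaussianPdf
    have hvec1 : z - (a + G *ᵥ w) = (z - a - G *ᵥ s) - G *ᵥ (w - s) := by
      rw [mulVec_sub]; abel
    have hvec2 : w - μs = (w - s) - K⁻¹ *ᵥ (Gᵀ *ᵥ (C⁻¹ *ᵥ (z - a - G *ᵥ s))) := by
      rw [hμs]; abel
    have hvec3 : z - (a + G *ᵥ s) = z - a - G *ᵥ s := by abel
    have hexp : (-(1/2) * ((z - (a + G *ᵥ w)) ⬝ᵥ (C⁻¹ *ᵥ (z - (a + G *ᵥ w)))))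
          + (-(1/2) * ((w - s) ⬝ᵥ (S⁻¹ *ᵥ (w - s))))
        = (-(1/2) * ((z - (a + G *ᵥ s)) ⬝ᵥ ((C + G * S * Gᵀ)⁻¹ *ᵥ (z - (a + G *ᵥ s)))))
          + (-(1/2) * ((w - μs) ⬝ᵥ ((K⁻¹)⁻¹ *ᵥ (w - μs)))) := by
      rw [hvec1, hvec2, hvec3, hKiKi]
      have := quadId hC hS (G := G) (w - s) (z - a - G *ᵥ s)
      rw [← hKdef] at this
      ring_nf
      ring_nf at this
      linarith [this]
    -- determinant part
    have hdets : C.det ^ (-(1:ℝ)/2) * S.det ^ (-(1:ℝ)/2)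
        = (C + G * S * Gᵀ).det ^ (-(1:ℝ)/2) * (K⁻¹).det ^ (-(1:ℝ)/2) := by
      rw [hdetKi, hdetSig]
      rw [Real.mul_rpow hC.det_pos.le (mul_nonneg hS.det_pos.le hK.det_pos.le),
        Real.mul_rpow hS.det_pos.le hK.det_pos.le,
        Real.inv_rpow hK.det_pos.le]
      have : (K.det ^ (-(1:ℝ)/2)) ≠ 0 := by
        have := Real.rpow_pos_of_pos hK.det_pos (-(1:ℝ)/2); linarith
      rw [← mul_assoc, mul_inv_cancel_right₀ this]
    have hE : Real.exp (-(1/2) * ((z - (a + G *ᵥ w)) ⬝ᵥ (C⁻¹ *ᵥ (z - (a + G *ᵥ w))))) *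
          Real.exp (-(1/2) * ((w - s) ⬝ᵥ (S⁻¹ *ᵥ (w - s))))
        = Real.exp (-(1/2) * ((z - (a + G *ᵥ s)) ⬝ᵥ ((C + G * S * Gᵀ)⁻¹ *ᵥ (z - (a + G *ᵥ s))))) *
          Real.exp (-(1/2) * ((w - μs) ⬝ᵥ ((K⁻¹)⁻¹ *ᵥ (w - μs)))) := by
      rw [← Real.exp_add, ← Real.exp_add, hexp]
    calc (2 * π) ^ (-(Fintype.card (Fin n) : ℝ) / 2) * C.det ^ (-(1:ℝ)/2) *
          Real.exp (-(1/2) * ((z - (a + G *ᵥ w)) ⬝ᵥ (C⁻¹ *ᵥ (z - (a + G *ᵥ w))))) *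
          ((2 * π) ^ (-(Fintype.card (Fin n) : ℝ) / 2) * S.det ^ (-(1:ℝ)/2) *
            Real.exp (-(1/2) * ((w - s) ⬝ᵥ (S⁻¹ *ᵥ (w - s)))))
        = (2 * π) ^ (-(Fintype.card (Fin n) : ℝ) / 2) *
            (2 * π) ^ (-(Fintype.card (Fin n) : ℝ) / 2) *
            (C.det ^ (-(1:ℝ)/2) * S.det ^ (-(1:ℝ)/2)) *
            (Real.exp (-(1/2) * ((z - (a + G *ᵥ w)) ⬝ᵥ (C⁻¹ *ᵥ (z - (a + G *ᵥ w))))) *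
             Real.exp (-(1/2) * ((w - s) ⬝ᵥ (S⁻¹ *ᵥ (w - s))))) := by ring
      _ = _ := by rw [hdets, hE]; ring
  simp_rw [hpt]
  rw [MeasureTheory.integral_const_mul, integral_mvGaussianPdf μs K⁻¹ hK.inv, mul_one]

end Stmt14Aux

open Stmt14Aux

theorem stmt14 {n : ℕ} (P Q : Matrix (Fin n) (Fin n) ℝ) (hP : P.PosDef) (hQ : Q.PosDef)
    (A : Matrix (Fin n) (Fin n) ℝ) (S : Matrix (Fin n) (Fin n) ℝ) (hS : S.PosDef) :
    (P - (P * Aᵀ * (A * P * Aᵀ + Q)⁻¹) * (A * P * Aᵀ + Q) * (P * Aᵀ * (A * P * Aᵀ + Q)⁻¹)ᵀ).PosDef ∧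
      ∀ (m s z : Fin n → ℝ),
        ∫ w : Fin n → ℝ,
            mvGaussianPdf (m + (P * Aᵀ * (A * P * Aᵀ + Q)⁻¹) *ᵥ (w - A *ᵥ m))
              (P - (P * Aᵀ * (A * P * Aᵀ + Q)⁻¹) * (A * P * Aᵀ + Q) *
                (P * Aᵀ * (A * P * Aᵀ + Q)⁻¹)ᵀ) z *
              mvGaussianPdf s S w =
          mvGaussianPdf (m + (P * Aᵀ * (A * P * Aᵀ + Q)⁻¹) *ᵥ (s - A *ᵥ m))
            (P + (P * Aᵀ * (A * P * Aᵀ + Q)⁻¹) * (S - A * P * Aᵀ - Q) *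
              (P * Aᵀ * (A * P * Aᵀ + Q)⁻¹)ᵀ) z := by
  have hM : (A * P * Aᵀ + Q).PosDef := M_posDef hP hQ
  set M := A * P * Aᵀ + Q with hMdef
  set G := P * Aᵀ * M⁻¹ with hGdef
  have hGT : Gᵀ = M⁻¹ * A * P := by
    rw [hGdef, transpose_mul, transpose_mul, transpose_transpose,
      inv_transpose_self hM, transpose_self hP, Matrix.mul_assoc]
  have hMMi : M * M⁻¹ = 1 := mul_nonsing_inv M (isUnit_iff_ne_zero.mpr hM.det_pos.ne')
  have hGMGT : G * M * Gᵀ = P * Aᵀ * M⁻¹ * A * P := by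
    rw [hGT, hGdef]
    calc P * Aᵀ * M⁻¹ * M * (M⁻¹ * A * P)
        = P * Aᵀ * M⁻¹ * ((M * M⁻¹) * A * P) := by noncomm_ring
      _ = P * Aᵀ * M⁻¹ * A * P := by rw [hMMi]; noncomm_ring
  have hCeq : P - G * M * Gᵀ = (P⁻¹ + Aᵀ * Q⁻¹ * A)⁻¹ := by
    rw [hGMGT, woodbury hP hQ, ← hMdef]
  have hC : (P - G * M * Gᵀ).PosDef := by
    rw [hCeq]; exact (N_posDef hP hQ).inv
  refine ⟨hC, fun m s z => ?_⟩
  have hcov : P + G * (S - A * P * Aᵀ - Q) * Gᵀ = (P - G * M * Gᵀ) + G * S * Gᵀ := by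
    rw [hMdef]; noncomm_ring
  have hmean : ∀ w : Fin n → ℝ, m + G *ᵥ (w - A *ᵥ m) = (m - G *ᵥ (A *ᵥ m)) + G *ᵥ w := by
    intro w; rw [mulVec_sub]; abel
  simp_rw [hmean, hcov]
  exact conv hC hS (m - G *ᵥ (A *ᵥ m)) s z
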